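/- The polynomials F_n satisfy the linear recurrence F_{n+1}(X) = X·F_n(X) − F_{n−1}(X) for all n ≥ 1. -/
import Mathlib


open Polynomial

noncomputable def TT : ℕ → ℤ[X]
  | 0 => 2
  | 1 => Polynomial.X
  | (k+2) => Polynomial.X * TT (k+1) - TT k

noncomputable def F (n : ℕ) : ℤ[X] := 1 + ∑ k ∈ Finset.Icc 1 n, TT k

lemma F_succ (n : ℕ) : F (n + 1) = F n + TT (n + 1) := by
  unfold F
  rw [Finset.sum_Icc_succ_top (by omega : 1 ≤ n + 1)]
  ring

theorem stmt_4 (n : ℕ) (hn : 1 ≤ n) :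
    F (n + 1) = Polynomial.X * F n - F (n - 1) := by
  induction n, hn using Nat.le_induction with
  | base =>
    have t1 : TT 1 = Polynomial.X := rfl
    have t2 : TT 2 = Polynomial.X * Polynomial.X - 2 := rfl
    simp only [F, TT]
    norm_num [Finset.sum_Icc_succ_top, Finset.Icc_self, t1, t2]
    ring
  | succ n hn ih =>
    have h1 : F (n + 1) = F n + TT (n + 1) := F_succ n
    have h2 : F (n + 2) = F (n + 1) + TT (n + 2) := F_succ (n + 1)
    have h3 : TT (n + 2) = Polynomial.X * TT (n + 1) - TT n := rfl
    have hFn : F n = F (n - 1 + 1) := by congr 1; omega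
    rw [F_succ] at hFn
    have hTn : TT (n - 1 + 1) = TT n := by congr 1; omega
    rw [hTn] at hFn
    simp only [Nat.add_sub_cancel]
    linear_combination h2 + h3 - Polynomial.X * h1 + ih + hFn
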